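/- In gl(2,ℝ) with the Vaisman-type structure ω = e⁰∧(e⁺ - e⁻) - 2h*∧(e⁺ + e⁻) and μ = 1 complex structure, the metric g = -ω∘J given by formula g = -(a₊ - a₋)/2·(e⁰)² - 2(a₊-a₋)(h*)² + 2(a₊+a₋)e⁰h* - 2a₊(e⁺)² + 2a₋(e⁻)² - a_h e⁰(e⁺+e⁻) - 2a_h h*(e⁺-e⁻) is positive definite if and only if -a_h² > 4 a₊ a₋ and a₋ > 0 > a₊. -/

import Mathlib

/-!
STATEMENT 18. In `gl(2,ℝ)` with the lcs structure `ω = e⁰ ∧ φ + dφ`,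
`φ = a_h h* + a₊ e⁺ + a₋ e⁻`, and the `μ = 1` complex structure, the locally conformally
pseudo-Kähler metric `g = -ω ∘ J`, given by
`g = -(a₊ - a₋)/2 (e⁰)² - 2(a₊ - a₋)(h*)² + 2(a₊ + a₋) e⁰h* - 2a₊ (e⁺)² + 2a₋ (e⁻)²
     - a_h e⁰(e⁺ + e⁻) - 2a_h h*(e⁺ - e⁻)`,
is positive definite if and only if `-a_h² > 4 a₊ a₋` and `a₋ > 0 > a₊`.

We realize `gl(2,ℝ)` on `Fin 4 → ℝ` (coordinates w.r.t. `e₀, h, e₊, e₋`); products of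
1-forms denote symmetric products.
-/

namespace Stmt18

/-- the metric `g` of the formula above, as a symmetric bilinear form. -/
noncomputable def met (ah ap am : ℝ) (u v : Fin 4 → ℝ) : ℝ :=
  -((ap - am) / 2) * (u 0 * v 0) - 2 * (ap - am) * (u 1 * v 1)
  + (ap + am) * (u 0 * v 1 + u 1 * v 0)
  - 2 * ap * (u 2 * v 2) + 2 * am * (u 3 * v 3)
  - ah / 2 * (u 0 * v 2 + u 2 * v 0) - ah / 2 * (u 0 * v 3 + u 3 * v 0)
  - ah * (u 1 * v 2 + u 2 * v 1) + ah * (u 1 * v 3 + u 3 * v 1)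

end Stmt18

set_option maxHeartbeats 800000 in
open Stmt18 in
theorem stmt18 (ah ap am : ℝ) :
    (∀ u : Fin 4 → ℝ, u ≠ 0 → 0 < met ah ap am u u)
      ↔ (-ah ^ 2 > 4 * ap * am ∧ am > 0 ∧ 0 > ap) := by
  constructor
  · intro h
    have hm : (0:ℝ) < 2 * am := by
      have := h ![0,0,0,1] (by
        intro hc; have := congrFun hc 3; simp at this)
      simpa [met] using this
    have hp : (0:ℝ) < -2 * ap := by
      have := h ![0,0,1,0] (by
        intro hc; have := congrFun hc 2; simp at this)
      simpa [met] using this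
    have hm' : (0:ℝ) < am := by linarith
    have hp' : ap < 0 := by linarith
    have h3 := h ![0, 1, -ah/(2*ap), -ah/(2*am)] (by
      intro hc; have := congrFun hc 1; simp at this)
    simp only [met] at h3
    norm_num [Matrix.cons_val_zero, Matrix.cons_val_one, Matrix.cons_val_two, Matrix.cons_val_three] at h3
    refine ⟨?_, hm', hp'⟩
    have hpm : ap * am < 0 := mul_neg_of_neg_of_pos hp' hm'
    have hap : ap ≠ 0 := ne_of_lt hp'
    have ham : am ≠ 0 := ne_of_gt hm'
    have e : -(2 * (ap - am)) - 2 * ap * (-ah / (2 * ap) * (-ah / (2 * ap)))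
          + 2 * am * (-ah / (2 * am) * (-ah / (2 * am)))
          - ah * (-ah / (2 * ap) + -ah / (2 * ap)) + ah * (-ah / (2 * am) + -ah / (2 * am))
        = (am - ap) * (4 * ap * am + ah ^ 2) / (2 * (ap * am)) := by
      field_simp; ring
    rw [e] at h3
    rcases div_pos_iff.mp h3 with ⟨h5, h6⟩ | ⟨h5, h6⟩
    · linarith
    · rw [gt_iff_lt, ← sub_neg]
      nlinarith [h5, hm', hp']
  · rintro ⟨hK, hm, hp⟩ u hu
    set a := u 0 with ha
    set b := u 1 with hb
    set c := u 2 with hc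
    set d := u 3 with hd
    clear_value a b c d
    have hK' : ah^2 + 4*ap*am < 0 := by linarith
    have hmp : 0 < am - ap := by linarith
    have hpm : ap * am < 0 := mul_neg_of_neg_of_pos hp hm
    have hD : 0 < -8*ap*am*(am-ap) := by nlinarith
    have hid : (-8*ap*am*(am-ap)) * met ah ap am u u
        = am*(am-ap)*(4*ap*c + ah*(a+2*b))^2
          + (-ap)*(am-ap)*(4*am*d + ah*(2*b-a))^2
          + (-(4*ap*am + ah^2))*((am-ap)*a + 2*(ap+am)*b)^2
          + 16*ap*am*(4*ap*am + ah^2)*b^2 := by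
      simp only [met, ← ha, ← hb, ← hc, ← hd]; ring
    have hne : a ≠ 0 ∨ b ≠ 0 ∨ c ≠ 0 ∨ d ≠ 0 := by
      by_contra hcon
      push_neg at hcon
      obtain ⟨h1, h2, h3, h4⟩ := hcon
      apply hu
      funext i
      fin_cases i <;> simp only [Pi.zero_apply] <;>
        [exact ha ▸ h1; exact hb ▸ h2; exact hc ▸ h3; exact hd ▸ h4]
    have key : 0 < (-8*ap*am*(am-ap)) * met ah ap am u u := by
      rw [hid]
      have t1 : 0 ≤ am*(am-ap)*(4*ap*c + ah*(a+2*b))^2 := by positivity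
      have t2 : 0 ≤ (-ap)*(am-ap)*(4*am*d + ah*(2*b-a))^2 := by
        apply mul_nonneg (by nlinarith) (sq_nonneg _)
      have t3 : 0 ≤ (-(4*ap*am + ah^2))*((am-ap)*a + 2*(ap+am)*b)^2 := by
        apply mul_nonneg (by linarith) (sq_nonneg _)
      have t4 : 0 ≤ 16*ap*am*(4*ap*am + ah^2)*b^2 := by
        apply mul_nonneg (by nlinarith) (sq_nonneg _)
      by_cases hb0 : b = 0
      · by_cases ha0 : a = 0
        · by_cases hc0 : c = 0
          · have hd0 : d ≠ 0 := by
              rcases hne with h1 | h1 | h1 | h1 <;> first | exact absurd ha0 h1 | exact absurd hb0 h1 | exact absurd hc0 h1 | exact h1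
            have hY : (4*am*d + ah*(2*b-a)) ≠ 0 := by
              rw [ha0, hb0]; simp
              exact ⟨ne_of_gt hm, hd0⟩
            have : 0 < (-ap)*(am-ap)*(4*am*d + ah*(2*b-a))^2 :=
              mul_pos (by nlinarith) (pow_two_pos_of_ne_zero hY)
            linarith
          · have hX : (4*ap*c + ah*(a+2*b)) ≠ 0 := by
              rw [ha0, hb0]; simp
              exact ⟨ne_of_lt hp, hc0⟩
            have : 0 < am*(am-ap)*(4*ap*c + ah*(a+2*b))^2 :=
              mul_pos (by nlinarith) (pow_two_pos_of_ne_zero hX)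
            linarith
        · have hZ : ((am-ap)*a + 2*(ap+am)*b) ≠ 0 := by
            rw [hb0]
            simpa using mul_ne_zero (show am - ap ≠ 0 from ne_of_gt hmp) ha0
          have : 0 < (-(4*ap*am + ah^2))*((am-ap)*a + 2*(ap+am)*b)^2 :=
            mul_pos (by linarith) (pow_two_pos_of_ne_zero hZ)
          linarith
      · have : 0 < 16*ap*am*(4*ap*am + ah^2)*b^2 :=
          mul_pos (by nlinarith) (pow_two_pos_of_ne_zero hb0)
        linarith
    by_contra hq
    push_neg at hq
    have : (-8*ap*am*(am-ap)) * met ah ap am u u ≤ 0 :=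
      mul_nonpos_of_nonneg_of_nonpos hD.le hq
    linarith
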